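/- Let f : ℝ⁴ → [0,∞) be given by f(θ₁,θ₂,θ₃,θ₄) = (θ₁² + θ₂² + θ₃²)(1 + θ₁² + θ₂² + θ₃²)(1 + θ₄²). Then for every α with −3/2 < α < −1, the function f^α is Lebesgue integrable on ℝ⁴, i.e. ∫_{ℝ⁴} f(θ)^α dθ < ∞. -/

import Mathlib

open MeasureTheory Filter Metric Set
open scoped Topology ENNReal

noncomputable section

namespace NoncompactMinimizerAux

/-- 1-D integrability of `y ↦ y² ((y²(1+y²))^α)` on `(0, ∞)` for `-3/2 < α < -1`. -/
lemma oneD (α : ℝ) (hα₁ : -(3 / 2 : ℝ) < α) (hα₂ : α < -1) :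
    IntegrableOn (fun y : ℝ => y ^ 2 * ((y ^ 2 * (1 + y ^ 2)) ^ α)) (Ioi 0) := by
  have hmeas : Measurable fun y : ℝ => y ^ 2 * ((y ^ 2 * (1 + y ^ 2)) ^ α) := by
    fun_prop
  have hαneg : α < 0 := hα₂.trans (by norm_num)
  have hsplit : (Ioi (0:ℝ)) = Ioc (0:ℝ) 1 ∪ Ioi 1 := by
    rw [Ioc_union_Ioi_eq_Ioi]; norm_num
  rw [hsplit]
  refine IntegrableOn.union ?_ ?_
  · -- on (0,1], dominate by y ^ (2α + 2)
    have hdom : IntegrableOn (fun y : ℝ => y ^ (2 * α + 2 : ℝ)) (Ioc (0:ℝ) 1) := by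
      have := (intervalIntegral.intervalIntegrable_rpow'
        (a := 0) (b := 1) (r := 2 * α + 2) (by linarith)).1
      simpa using this
    refine hdom.integrable.mono hmeas.aestronglyMeasurable ?_
    filter_upwards [ae_restrict_mem measurableSet_Ioc] with y hy
    have hy0 : 0 < y := hy.1
    have hy1 : y ≤ 1 := hy.2
    have h1 : (0:ℝ) ≤ y ^ 2 * (1 + y ^ 2) := by positivity
    rw [Real.norm_eq_abs, Real.norm_eq_abs, abs_of_nonneg (by positivity),
      abs_of_nonneg (by positivity)]
    have hmul : (y ^ 2 * (1 + y ^ 2)) ^ α = (y ^ 2 : ℝ) ^ α * (1 + y ^ 2) ^ α :=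
      Real.mul_rpow (by positivity) (by positivity)
    have hle1 : ((1 : ℝ) + y ^ 2) ^ α ≤ 1 :=
      Real.rpow_le_one_of_one_le_of_nonpos (by nlinarith) hαneg.le
    have hy2 : (y ^ 2 : ℝ) ^ α = y ^ (2 * α : ℝ) := by
      rw [← Real.rpow_natCast y 2, ← Real.rpow_mul hy0.le]
      norm_num
    calc y ^ 2 * (y ^ 2 * (1 + y ^ 2)) ^ α
        ≤ y ^ 2 * ((y ^ 2 : ℝ) ^ α * 1) := by
          rw [hmul]
          have : (0:ℝ) ≤ (y ^ 2 : ℝ) ^ α := Real.rpow_nonneg (by positivity) _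
          nlinarith [Real.rpow_nonneg (show (0:ℝ) ≤ y ^ 2 by positivity) α,
            mul_le_of_le_one_right this hle1]
      _ = y ^ (2 * α + 2 : ℝ) := by
          rw [mul_one, hy2, ← Real.rpow_natCast y 2,
            ← Real.rpow_add hy0]
          norm_num [add_comm]
  · -- on (1,∞), dominate by y ^ (4α + 2)
    have hdom : IntegrableOn (fun y : ℝ => y ^ (4 * α + 2 : ℝ)) (Ioi (1:ℝ)) :=
      integrableOn_Ioi_rpow_of_lt (by linarith) one_pos
    refine hdom.integrable.mono hmeas.aestronglyMeasurable ?_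
    filter_upwards [ae_restrict_mem measurableSet_Ioi] with y hy
    have hy1 : (1:ℝ) < y := hy
    have hy0 : 0 < y := lt_trans one_pos hy1
    rw [Real.norm_eq_abs, Real.norm_eq_abs, abs_of_nonneg (by positivity),
      abs_of_nonneg (by positivity)]
    have hbase : (y ^ 4 : ℝ) ≤ y ^ 2 * (1 + y ^ 2) := by nlinarith
    have h4pos : (0:ℝ) < y ^ 4 := by positivity
    have hle : (y ^ 2 * (1 + y ^ 2)) ^ α ≤ (y ^ 4 : ℝ) ^ α :=
      Real.rpow_le_rpow_of_nonpos h4pos hbase hαneg.le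
    have hy4 : (y ^ 4 : ℝ) ^ α = y ^ (4 * α : ℝ) := by
      rw [← Real.rpow_natCast y 4, ← Real.rpow_mul hy0.le]
      norm_num
    calc y ^ 2 * (y ^ 2 * (1 + y ^ 2)) ^ α
        ≤ y ^ 2 * y ^ (4 * α : ℝ) := by
          have : (0:ℝ) ≤ y ^ 2 := by positivity
          rw [← hy4]; exact mul_le_mul_of_nonneg_left hle this
      _ = y ^ (4 * α + 2 : ℝ) := by
          rw [← Real.rpow_natCast y 2, ← Real.rpow_add hy0]
          norm_num [add_comm]

/-- Radial integrability transfer on `ℝ³`. -/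
lemma integrable_fun_norm (f : ℝ → ℝ) (hf : Measurable f)
    (h : IntegrableOn (fun y : ℝ => y ^ 2 * f y) (Ioi 0)) :
    Integrable (fun x : EuclideanSpace ℝ (Fin 3) => f ‖x‖) := by
  set E := EuclideanSpace ℝ (Fin 3)
  have hdim : Module.finrank ℝ E = 3 := finrank_euclideanSpace_fin
  -- Step 1: integrability w.r.t. `volumeIoiPow 2`
  have h1 : Integrable (fun y : Ioi (0:ℝ) => f y.1) (Measure.volumeIoiPow 2) := by
    rw [Measure.volumeIoiPow, integrable_withDensity_iff
      (by exact (measurable_subtype_coe.pow_const 2).ennreal_ofReal)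
      (Eventually.of_forall fun y => ENNReal.ofReal_lt_top)]
    have hcoe : Integrable
        ((fun y : ℝ => f y * (ENNReal.ofReal (y ^ 2)).toReal) ∘ (Subtype.val))
        (Measure.comap Subtype.val volume :
          Measure (Ioi (0:ℝ))) := by
      rw [← (MeasurableEmbedding.subtype_coe measurableSet_Ioi).integrable_map_iff,
        MeasurableEmbedding.map_comap (MeasurableEmbedding.subtype_coe measurableSet_Ioi)]
      rw [Subtype.range_coe]
      refine h.congr ?_
      filter_upwards [ae_restrict_mem measurableSet_Ioi] with y hy
      rw [ENNReal.toReal_ofReal (by positivity)]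
      ring
    exact hcoe
  -- Step 2: integrability on the product (sphere × Ioi 0)
  have h2 : Integrable (fun p : sphere (0:E) 1 × Ioi (0:ℝ) => f p.2.1)
      ((volume : Measure E).toSphere.prod (Measure.volumeIoiPow 2)) := by
    have := (integrable_const (1:ℝ) (μ := (volume : Measure E).toSphere)).mul_prod h1
    simpa using this
  -- Step 3: transfer via the polar-coordinates homeomorphism
  have h2' : Integrable (fun p : sphere (0:E) 1 × Ioi (0:ℝ) => f p.2.1)
      ((volume : Measure E).toSphere.prod
        (Measure.volumeIoiPow (Module.finrank ℝ E - 1))) := by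
    rw [hdim]; exact h2
  have h3 : Integrable
      ((fun p : sphere (0:E) 1 × Ioi (0:ℝ) => f p.2.1) ∘ (homeomorphUnitSphereProd E))
      ((volume : Measure E).comap Subtype.val) := by
    refine ((volume : Measure E).measurePreserving_homeomorphUnitSphereProd.integrable_comp
      ?_).mpr h2'
    exact (hf.comp (measurable_subtype_coe.comp measurable_snd)).aestronglyMeasurable
  -- Step 4: back to the whole space
  have h4 : IntegrableOn (fun x : E => f ‖x‖) ({0}ᶜ : Set E) volume := by
    have hmeas0 : MeasurableSet ({0}ᶜ : Set E) := (measurableSet_singleton 0).compl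
    have hr : (volume : Measure E).restrict ({0}ᶜ) =
        Measure.map Subtype.val
          (((volume : Measure E).comap Subtype.val) : Measure ({0}ᶜ : Set E)) := by
      rw [MeasurableEmbedding.map_comap (MeasurableEmbedding.subtype_coe hmeas0),
        Subtype.range_coe]
    rw [IntegrableOn, hr, (MeasurableEmbedding.subtype_coe hmeas0).integrable_map_iff]
    simpa [Function.comp_def, homeomorphUnitSphereProd_apply_snd_coe] using h3
  have : Integrable (fun x : E => f ‖x‖) ((volume : Measure E).restrict ({0}ᶜ : Set E)) := h4
  simpa using this

/-- Integrability of `x ↦ ((‖x‖²)(1+‖x‖²))^α` on `ℝ³`. -/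
lemma integrable_threeD (α : ℝ) (hα₁ : -(3 / 2 : ℝ) < α) (hα₂ : α < -1) :
    Integrable (fun x : EuclideanSpace ℝ (Fin 3) =>
      ((x 0 ^ 2 + x 1 ^ 2 + x 2 ^ 2) * (1 + (x 0 ^ 2 + x 1 ^ 2 + x 2 ^ 2))) ^ α) := by
  have key := integrable_fun_norm (fun y : ℝ => (y ^ 2 * (1 + y ^ 2)) ^ α)
    (by fun_prop) (oneD α hα₁ hα₂)
  refine key.congr (Eventually.of_forall fun x => ?_)
  have hnorm : ‖x‖ ^ 2 = x 0 ^ 2 + x 1 ^ 2 + x 2 ^ 2 := by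
    rw [EuclideanSpace.norm_eq, Real.sq_sqrt (by positivity)]
    simp [Fin.sum_univ_three]
  show (‖x‖ ^ 2 * (1 + ‖x‖ ^ 2)) ^ α = _
  rw [hnorm]

/-- Integrability of `t ↦ (1+t²)^α` on `ℝ` for `α < -1`. -/
lemma integrable_oneD_factor (α : ℝ) (hα₂ : α < -1) :
    Integrable (fun t : ℝ => ((1 : ℝ) + t ^ 2) ^ α) := by
  have h : ((Module.finrank ℝ ℝ : ℝ)) < -(2 * α) := by
    simp only [Module.finrank_self, Nat.cast_one]; linarith
  have := integrable_rpow_neg_one_add_norm_sq (E := ℝ) (μ := volume) h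
  refine this.congr (Eventually.of_forall fun t => ?_)
  show ((1:ℝ) + ‖t‖ ^ 2) ^ (-(-(2 * α)) / 2) = ((1:ℝ) + t ^ 2) ^ α
  rw [Real.norm_eq_abs, sq_abs]
  congr 1
  ring

end NoncompactMinimizerAux

open NoncompactMinimizerAux

/-- **Integrable invariant density over a non-compact minimizer manifold
(Example `non-compact minimizer set`).** For
`f(θ) = (θ₁²+θ₂²+θ₃²)(1+θ₁²+θ₂²+θ₃²)(1+θ₄²)` on `ℝ⁴` and every
`α ∈ (-3/2, -1)`, the function `f^α` is Lebesgue integrable on `ℝ⁴`. -/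
theorem integrable_invariant_density_noncompact_minimizer
    (α : ℝ) (hα₁ : -(3 / 2 : ℝ) < α) (hα₂ : α < -1) :
    Integrable (fun θ : EuclideanSpace ℝ (Fin 4) =>
      ((θ 0 ^ 2 + θ 1 ^ 2 + θ 2 ^ 2) * (1 + θ 0 ^ 2 + θ 1 ^ 2 + θ 2 ^ 2) *
        (1 + θ 3 ^ 2)) ^ α) := by
  classical
  -- the three-variable factor, on the plain pi space
  set G : (Fin 3 → ℝ) → ℝ := fun x =>
    ((x 0 ^ 2 + x 1 ^ 2 + x 2 ^ 2) * (1 + (x 0 ^ 2 + x 1 ^ 2 + x 2 ^ 2))) ^ α with hG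
  have hGmeas : Measurable G := by fun_prop
  have hGint : Integrable G (volume : Measure (Fin 3 → ℝ)) := by
    have h3 := integrable_threeD α hα₁ hα₂
    have hmp := EuclideanSpace.volume_preserving_symm_measurableEquiv_toLp (Fin 3)
    exact (hmp.integrable_comp hGmeas.aestronglyMeasurable).mp h3
  -- the one-variable factor
  set h : ℝ → ℝ := fun t => ((1 : ℝ) + t ^ 2) ^ α with hh
  have hhint : Integrable h := integrable_oneD_factor α hα₂
  -- product integrability
  have hprod : Integrable (fun p : ℝ × (Fin 3 → ℝ) => h p.1 * G p.2)
      ((volume : Measure ℝ).prod (volume : Measure (Fin 3 → ℝ))) :=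
    hhint.mul_prod hGint
  -- transfer to `Fin 4 → ℝ`
  have hmp4 := MeasureTheory.volume_preserving_piFinSuccAbove (fun _ : Fin 4 => ℝ) 3
  have hpi : Integrable
      ((fun p : ℝ × (Fin 3 → ℝ) => h p.1 * G p.2) ∘
        (MeasurableEquiv.piFinSuccAbove (fun _ : Fin 4 => ℝ) 3))
      (volume : Measure (Fin 4 → ℝ)) :=
    (hmp4.integrable_comp hprod.aestronglyMeasurable).mpr hprod
  -- transfer to EuclideanSpace
  have hmpE := EuclideanSpace.volume_preserving_symm_measurableEquiv_toLp (Fin 4)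
  have hE : Integrable
      (((fun p : ℝ × (Fin 3 → ℝ) => h p.1 * G p.2) ∘
        (MeasurableEquiv.piFinSuccAbove (fun _ : Fin 4 => ℝ) 3)) ∘
        ((MeasurableEquiv.toLp 2 (Fin 4 → ℝ)).symm))
      (volume : Measure (EuclideanSpace ℝ (Fin 4))) :=
    (hmpE.integrable_comp hpi.aestronglyMeasurable).mpr hpi
  refine hE.congr (Eventually.of_forall fun θ => ?_)
  have hsa0 : ((3 : Fin 4).succAbove 0) = (0 : Fin 4) := by decide
  have hsa1 : ((3 : Fin 4).succAbove 1) = (1 : Fin 4) := by decide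
  have hsa2 : ((3 : Fin 4).succAbove 2) = (2 : Fin 4) := by decide
  show h (θ 3) * G (fun j => θ ((3 : Fin 4).succAbove j)) = _
  simp only [hG, hh]
  rw [hsa0, hsa1, hsa2]
  have hab : (0:ℝ) ≤ (θ 0 ^ 2 + θ 1 ^ 2 + θ 2 ^ 2) * (1 + (θ 0 ^ 2 + θ 1 ^ 2 + θ 2 ^ 2)) := by
    positivity
  have hc : (0:ℝ) ≤ 1 + θ 3 ^ 2 := by positivity
  rw [mul_comm, ← Real.mul_rpow hab hc]
  · congr 1
    ring

end
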